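/- Let d ≥ 1. Let X_1,…,X_n be independent random points uniformly distributed in [0,1]^d and P_n = {X_1,…,X_n}. Define m₁ = min{ m ∈ ℕ : m^d (H_{m^d} − 2) ≥ n } and m₂ = max{ m ∈ ℕ : 2 m^d log(m^d) ≤ n }, where H_ℓ = Σ_{k=1}^ℓ 1/k. Then 1/(4 m₁) ≤ E[ sup_{x ∈ [0,1]^d} dist(x, P_n) ] ≤ 2/m₂. -/

import Mathlib

open MeasureTheory Set
open scoped ENNReal

/-- The maximum metric on the `d`-dimensional torus:
`dist(x,y) = min_{k ∈ ℤ^d} ‖x + k − y‖_∞` for `x, y ∈ [0,1]^d`. -/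
noncomputable def tdist (d : ℕ) (x y : Fin d → ℝ) : ℝ :=
  ⨅ k : Fin d → ℤ, ‖(x + fun i => (k i : ℝ)) - y‖

/-- The unit cube `[0,1]^d`. -/
def unitCube (d : ℕ) : Set (Fin d → ℝ) := Set.Icc 0 1

/-- The class `F_d` of functions `f : [0,1]^d → ℝ` that are `1`-Lipschitz with respect
to the torus metric `tdist`. -/
def LipClass (d : ℕ) : Set ((Fin d → ℝ) → ℝ) :=
  {f | ∀ x ∈ unitCube d, ∀ y ∈ unitCube d, |f x - f y| ≤ tdist d x y}

/-- Lebesgue measure restricted to the unit cube `[0,1]^d`. -/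
noncomputable def cubeMeasure (d : ℕ) : Measure (Fin d → ℝ) :=
  volume.restrict (unitCube d)

lemma tdist_bdd (d : ℕ) (x y : Fin d → ℝ) :
    BddBelow (Set.range fun k : Fin d → ℤ => ‖(x + fun i => (k i : ℝ)) - y‖) :=
  ⟨0, by rintro _ ⟨k, rfl⟩; exact norm_nonneg _⟩

lemma tdist_nonneg (d : ℕ) (x y : Fin d → ℝ) : 0 ≤ tdist d x y :=
  le_ciInf fun k => norm_nonneg _

lemma tdist_le_norm (d : ℕ) (x y : Fin d → ℝ) : tdist d x y ≤ ‖x - y‖ := by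
  have h := ciInf_le (tdist_bdd d x y) (0 : Fin d → ℤ)
  have e : (x + fun i => ((0 : Fin d → ℤ) i : ℝ)) - y = x - y := by
    funext i; simp
  rw [tdist, ← e]; exact h

lemma tdist_le_k (d : ℕ) (x y : Fin d → ℝ) (k : Fin d → ℤ) :
    tdist d x y ≤ ‖(x + fun i => (k i : ℝ)) - y‖ :=
  ciInf_le (tdist_bdd d x y) k

lemma le_tdist (d : ℕ) (x y : Fin d → ℝ) (r : ℝ)
    (h : ∀ k : Fin d → ℤ, r ≤ ‖(x + fun i => (k i : ℝ)) - y‖) : r ≤ tdist d x y :=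
  le_ciInf h

/-- coordinate lower bound -/
lemma le_tdist_of_coord (d : ℕ) (x y : Fin d → ℝ) (r : ℝ) (i₀ : Fin d)
    (hx : x ∈ unitCube d) (hy : y ∈ unitCube d)
    (h1 : r ≤ |x i₀ - y i₀|) (h2 : |x i₀ - y i₀| ≤ 1 - r) : r ≤ tdist d x y := by
  apply le_tdist
  intro k
  have hcoord : r ≤ |x i₀ + (k i₀ : ℝ) - y i₀| := by
    rcases eq_or_ne (k i₀) 0 with h0 | h0
    · simpa [h0] using h1
    · have hk : (1 : ℝ) ≤ |(k i₀ : ℝ)| := by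
        have := Int.one_le_abs h0
        calc (1:ℝ) = ((1:ℤ):ℝ) := by norm_num
        _ ≤ ((|k i₀| : ℤ) : ℝ) := by exact_mod_cast this
        _ = |(k i₀ : ℝ)| := by rw [← Int.cast_abs]
      have : |(k i₀ : ℝ)| - |x i₀ - y i₀| ≤ |x i₀ + (k i₀:ℝ) - y i₀| := by
        have := abs_sub_abs_le_abs_sub ((k i₀:ℝ)) (-(x i₀ - y i₀))
        simp only [abs_neg] at this
        calc |(k i₀:ℝ)| - |x i₀ - y i₀| ≤ |(k i₀:ℝ) - -(x i₀ - y i₀)| := this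
        _ = |x i₀ + (k i₀:ℝ) - y i₀| := by ring_nf
      linarith
  calc r ≤ |x i₀ + (k i₀ : ℝ) - y i₀| := hcoord
  _ = ‖((x + fun i => (k i : ℝ)) - y) i₀‖ := by simp [Real.norm_eq_abs]
  _ ≤ ‖(x + fun i => (k i : ℝ)) - y‖ := norm_le_pi_norm _ i₀

lemma tdist_le_half (d : ℕ) {x y : Fin d → ℝ}
    (hx : x ∈ unitCube d) (hy : y ∈ unitCube d) : tdist d x y ≤ 1/2 := by
  classical
  refine (tdist_le_k d x y
    (fun i => if y i - x i > 1/2 then 1 else if x i - y i > 1/2 then -1 else 0)).trans ?_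
  rw [pi_norm_le_iff_of_nonneg (by norm_num)]
  intro i
  have hx1 := hx.1 i; have hx2 := hx.2 i; have hy1 := hy.1 i; have hy2 := hy.2 i
  simp only [Pi.add_apply, Pi.sub_apply, Real.norm_eq_abs, Pi.zero_apply, Pi.one_apply] at *
  rw [abs_le]
  split_ifs with h1 h2 <;> push_cast <;> constructor <;> linarith

/-- tdist is 1-Lipschitz in the second argument. -/
lemma tdist_lip (d : ℕ) (x y y' : Fin d → ℝ) :
    tdist d x y ≤ tdist d x y' + ‖y - y'‖ := by
  have h : ∀ k : Fin d → ℤ, tdist d x y - ‖y - y'‖ ≤ ‖(x + fun i => (k i : ℝ)) - y'‖ := by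
    intro k
    have h1 := tdist_le_k d x y k
    have h2 : ‖(x + fun i => (k i : ℝ)) - y‖ ≤ ‖(x + fun i => (k i : ℝ)) - y'‖ + ‖y' - y‖ :=
      norm_sub_le_norm_sub_add_norm_sub _ _ _
    have h3 : ‖y' - y‖ = ‖y - y'‖ := norm_sub_rev _ _
    linarith
  have h2 := le_ciInf h
  simp only [tdist] at h2 ⊢
  linarith

/-- grid cell -/
def gcell (d m : ℕ) (j : Fin d → Fin m) : Set (Fin d → ℝ) :=
  Set.Icc (fun i => (j i : ℝ) / m) (fun i => ((j i : ℝ) + 1) / m)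

/-- center of a grid cell -/
noncomputable def gctr (d m : ℕ) (j : Fin d → Fin m) : Fin d → ℝ := fun i => ((j i : ℝ) + 1/2) / m

lemma gcell_subset (d m : ℕ) (hm : 0 < m) (j : Fin d → Fin m) :
    gcell d m j ⊆ unitCube d := by
  intro x hx
  have hm' : (0:ℝ) < m := by exact_mod_cast hm
  constructor <;> intro i
  · have := hx.1 i
    simp only [Pi.zero_apply]
    have : (0:ℝ) ≤ (j i : ℝ) / m := by positivity
    linarith [hx.1 i, this]
  · have h1 := hx.2 i
    have h2 : ((j i : ℝ) + 1) / m ≤ 1 := by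
      rw [div_le_one hm']
      have : (j i : ℝ) ≤ (m : ℝ) - 1 := by
        have := j i |>.is_lt
        have : ((j i : ℕ) : ℝ) ≤ ((m : ℕ) : ℝ) - 1 := by
          have hh : (j i : ℕ) + 1 ≤ m := (j i).is_lt
          have : ((j i : ℕ) : ℝ) + 1 ≤ (m : ℝ) := by exact_mod_cast hh
          linarith
        exact_mod_cast this
      linarith
    simp only [Pi.one_apply]
    exact le_trans h1 h2

lemma gctr_mem (d m : ℕ) (hm : 0 < m) (j : Fin d → Fin m) :
    gctr d m j ∈ gcell d m j := by
  have hm' : (0:ℝ) < m := by exact_mod_cast hm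
  constructor <;> intro i <;> simp only [gctr, gcell]
  · apply div_le_div_of_nonneg_right (by linarith) hm'.le
  · apply div_le_div_of_nonneg_right (by linarith) hm'.le

lemma mem_gcell_of_floor (d m : ℕ) (hm : 0 < m) {x : Fin d → ℝ} (hx : x ∈ unitCube d) :
    ∃ j : Fin d → Fin m, x ∈ gcell d m j := by
  have hm' : (0:ℝ) < m := by exact_mod_cast hm
  refine ⟨fun i => ⟨min ⌊m * x i⌋₊ (m-1), ?_⟩, ?_, ?_⟩
  · have : m - 1 < m := Nat.sub_lt hm one_pos
    exact lt_of_le_of_lt (min_le_right _ _) this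
  · intro i
    simp only
    set t := min ⌊m * x i⌋₊ (m-1) with ht
    have h1 : (t:ℝ) ≤ m * x i := by
      have h0 : (0:ℝ) ≤ m * x i := mul_nonneg hm'.le (hx.1 i)
      have := Nat.floor_le h0
      have h2 : (t:ℝ) ≤ (⌊m * x i⌋₊ : ℝ) := by exact_mod_cast min_le_left _ _
      linarith
    rw [div_le_iff₀ hm']
    linarith [h1]
  · intro i
    simp only
    set t := min ⌊m * x i⌋₊ (m-1) with ht
    rw [le_div_iff₀ hm']
    rcases le_or_gt (m * x i) ((m:ℝ) - 1 + 1) with h | h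
    · -- if ⌊m x i⌋ ≥ m-1 then t could be m-1 .. general: m * x i < t + 1
      rcases min_cases ⌊m * x i⌋₊ (m-1) with ⟨he, hle⟩ | ⟨he, hlt⟩
      · rw [ht, he]
        have hfl := Nat.lt_floor_add_one (m * x i)
        push_cast
        linarith
      · rw [ht, he]
        have hx2 := hx.2 i
        simp only [Pi.one_apply] at hx2
        have : m * x i ≤ m := by nlinarith
        have hcast : ((m-1 : ℕ) : ℝ) = (m:ℝ) - 1 := by
          have : (1:ℕ) ≤ m := hm
          push_cast [this]; ring
        rw [hcast]; linarith
    · exfalso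
      have hx2 := hx.2 i
      simp only [Pi.one_apply] at hx2
      nlinarith

/-- points in the same cell are at `tdist` at most `1/m`. -/
lemma tdist_le_of_mem_gcell (d m : ℕ) (hm : 0 < m) (j : Fin d → Fin m)
    {x y : Fin d → ℝ} (hx : x ∈ gcell d m j) (hy : y ∈ gcell d m j) :
    tdist d x y ≤ 1 / m := by
  have hm' : (0:ℝ) < m := by exact_mod_cast hm
  refine (tdist_le_norm d x y).trans ?_
  rw [pi_norm_le_iff_of_nonneg (by positivity)]
  intro i
  have h1 := hx.1 i; have h2 := hx.2 i; have h3 := hy.1 i; have h4 := hy.2 i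
  simp only [Pi.sub_apply, Real.norm_eq_abs] at *
  rw [abs_le]
  have e : ((j i:ℝ)+1)/m = (j i:ℝ)/m + 1/m := by ring
  constructor <;> linarith

/-- if `y` is in the cube but not in cell `j`, it is far from the center of `j`. -/
lemma le_tdist_gctr (d m : ℕ) (hm : 0 < m) (j : Fin d → Fin m)
    {y : Fin d → ℝ} (hy : y ∈ unitCube d) (hny : y ∉ gcell d m j) :
    1 / (2 * m) ≤ tdist d (gctr d m j) y := by
  have hm' : (0:ℝ) < m := by exact_mod_cast hm
  have hjm : ∀ i, (j i : ℝ) ≤ (m:ℝ) - 1 := by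
    intro i
    have hh : ((j i : ℕ) : ℝ) + 1 ≤ (m : ℝ) := by exact_mod_cast (j i).is_lt
    linarith
  -- find a coordinate where y escapes the cell
  have : ∃ i, y i < (j i : ℝ)/m ∨ ((j i : ℝ)+1)/m < y i := by
    by_contra hcon
    push_neg at hcon
    exact hny ⟨fun i => (hcon i).1, fun i => (hcon i).2⟩
  obtain ⟨i, hi⟩ := this
  have hy1 : (0:ℝ) ≤ y i := hy.1 i
  have hy2 : y i ≤ 1 := hy.2 i
  have hc : gctr d m j i = ((j i : ℝ) + 1/2)/m := rfl
  have h2m : (1:ℝ)/(2*m) = (1/2)/m := (div_div 1 2 (m:ℝ)).symm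
  have hj0 : (0:ℝ) ≤ (j i : ℝ)/m := by positivity
  have hsum : ((j i:ℝ)+1/2)/m + (1/2)/m = ((j i:ℝ)+1)/m := by ring
  have hle1 : ((j i:ℝ)+1)/m ≤ 1 := by
    rw [div_le_one hm']; linarith [hjm i]
  have hjd : (j i:ℝ)/m + (1/2)/m = ((j i:ℝ)+1/2)/m := by ring
  apply le_tdist_of_coord d _ y _ i (gcell_subset d m hm j (gctr_mem d m hm j)) hy
  · rw [hc, le_abs]
    rcases hi with hi | hi
    · left; linarith
    · right; linarith
  · rw [hc, abs_le]
    constructor <;> linarith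

lemma unitCube_nonempty (d : ℕ) : Nonempty (unitCube d) :=
  ⟨⟨0, le_refl 0, fun i => by norm_num⟩⟩

noncomputable def gfun (d n : ℕ) (ω : Fin n → Fin d → ℝ) : ℝ :=
  ⨆ x : unitCube d, ⨅ i : Fin n, tdist d ↑x (ω i)

lemma iInf_bdd (d n : ℕ) (x : Fin d → ℝ) (ω : Fin n → Fin d → ℝ) :
    BddBelow (Set.range fun i : Fin n => tdist d x (ω i)) :=
  ⟨0, by rintro _ ⟨i, rfl⟩; exact tdist_nonneg d _ _⟩

lemma iInf_nonneg' (d n : ℕ) (hn : 0 < n) (x : Fin d → ℝ) (ω : Fin n → Fin d → ℝ) :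
    0 ≤ ⨅ i : Fin n, tdist d x (ω i) := by
  haveI : Nonempty (Fin n) := ⟨⟨0, hn⟩⟩
  exact le_ciInf fun i => tdist_nonneg d _ _

lemma norm_le_one_of_cube (d : ℕ) {x : Fin d → ℝ} (hx : x ∈ unitCube d) : ‖x‖ ≤ 1 := by
  rw [pi_norm_le_iff_of_nonneg one_pos.le]
  intro i
  have h1 := hx.1 i; have h2 := hx.2 i
  simp only [Pi.zero_apply, Pi.one_apply] at h1 h2
  rw [Real.norm_eq_abs, abs_le]; exact ⟨by linarith, h2⟩

lemma iSup_bdd (d n : ℕ) (hn : 0 < n) (ω : Fin n → Fin d → ℝ) :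
    BddAbove (Set.range fun x : unitCube d => ⨅ i : Fin n, tdist d ↑x (ω i)) := by
  refine ⟨1 + ‖ω ⟨0, hn⟩‖, ?_⟩
  rintro _ ⟨x, rfl⟩
  calc (⨅ i : Fin n, tdist d ↑x (ω i)) ≤ tdist d ↑x (ω ⟨0, hn⟩) :=
        ciInf_le (iInf_bdd d n _ ω) _
  _ ≤ ‖(x:Fin d → ℝ) - ω ⟨0, hn⟩‖ := tdist_le_norm _ _ _
  _ ≤ ‖(x:Fin d → ℝ)‖ + ‖ω ⟨0, hn⟩‖ := norm_sub_le _ _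
  _ ≤ 1 + ‖ω ⟨0, hn⟩‖ := by linarith [norm_le_one_of_cube d x.2]

lemma gfun_lip (d n : ℕ) (hn : 0 < n) : LipschitzWith 1 (gfun d n) := by
  haveI : Nonempty (Fin n) := ⟨⟨0, hn⟩⟩
  haveI := unitCube_nonempty d
  have key : ∀ ω ω' : Fin n → Fin d → ℝ, gfun d n ω ≤ gfun d n ω' + dist ω ω' := by
    intro ω ω'
    apply ciSup_le
    intro x
    have h1 : ∀ i : Fin n, (⨅ i : Fin n, tdist d ↑x (ω i)) ≤ tdist d ↑x (ω' i) + dist ω ω' := by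
      intro i
      have h2 := tdist_lip d ↑x (ω i) (ω' i)
      have h3 : ‖ω i - ω' i‖ ≤ dist ω ω' := by
        rw [← dist_eq_norm]; exact dist_le_pi_dist ω ω' i
      have h4 : (⨅ i : Fin n, tdist d ↑x (ω i)) ≤ tdist d ↑x (ω i) :=
        ciInf_le (iInf_bdd d n _ ω) _
      linarith
    have h5 : (⨅ i : Fin n, tdist d ↑x (ω i)) - dist ω ω' ≤ ⨅ i : Fin n, tdist d ↑x (ω' i) :=
      le_ciInf fun i => by linarith [h1 i]
    have h6 : (⨅ i : Fin n, tdist d ↑x (ω' i)) ≤ gfun d n ω' :=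
      le_ciSup (iSup_bdd d n hn ω') x
    linarith
  apply LipschitzWith.of_dist_le_mul
  intro ω ω'
  rw [Real.dist_eq, abs_le]
  have k1 := key ω ω'
  have k2 := key ω' ω
  rw [dist_comm ω' ω] at k2
  constructor <;> simp only [NNReal.coe_one, one_mul] <;> linarith

def goodω (d n : ℕ) (ω : Fin n → Fin d → ℝ) : Prop := ∀ i, ω i ∈ unitCube d

lemma gfun_nonneg (d n : ℕ) (hn : 0 < n) (ω : Fin n → Fin d → ℝ) : 0 ≤ gfun d n ω := by
  haveI := unitCube_nonempty d
  obtain ⟨x⟩ := unitCube_nonempty d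
  exact le_trans (iInf_nonneg' d n hn x ω) (le_ciSup (iSup_bdd d n hn ω) x)

lemma gfun_le_half (d n : ℕ) (hn : 0 < n) {ω : Fin n → Fin d → ℝ} (hω : goodω d n ω) :
    gfun d n ω ≤ 1/2 := by
  haveI := unitCube_nonempty d
  apply ciSup_le
  intro x
  calc (⨅ i : Fin n, tdist d ↑x (ω i)) ≤ tdist d ↑x (ω ⟨0, hn⟩) :=
        ciInf_le (iInf_bdd d n _ ω) _
  _ ≤ 1/2 := tdist_le_half d x.2 (hω _)

lemma le_gfun_of_empty_cell (d n m : ℕ) (hn : 0 < n) (hm : 0 < m)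
    {ω : Fin n → Fin d → ℝ} (hω : goodω d n ω)
    (h : ∃ j : Fin d → Fin m, ∀ i, ω i ∉ gcell d m j) :
    1 / (2 * m) ≤ gfun d n ω := by
  haveI : Nonempty (Fin n) := ⟨⟨0, hn⟩⟩
  obtain ⟨j, hj⟩ := h
  have hc : gctr d m j ∈ unitCube d := gcell_subset d m hm j (gctr_mem d m hm j)
  have h1 : 1/(2*m) ≤ ⨅ i : Fin n, tdist d (gctr d m j) (ω i) :=
    le_ciInf fun i => le_tdist_gctr d m hm j (hω i) (hj i)
  exact le_trans h1 (le_ciSup (iSup_bdd d n hn ω) ⟨gctr d m j, hc⟩)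

lemma gfun_le_of_covered (d n m : ℕ) (hn : 0 < n) (hm : 0 < m)
    {ω : Fin n → Fin d → ℝ} (hω : goodω d n ω)
    (h : ∀ j : Fin d → Fin m, ∃ i, ω i ∈ gcell d m j) :
    gfun d n ω ≤ 1 / m := by
  haveI := unitCube_nonempty d
  apply ciSup_le
  intro x
  obtain ⟨j, hxj⟩ := mem_gcell_of_floor d m hm x.2
  obtain ⟨i, hi⟩ := h j
  calc (⨅ i : Fin n, tdist d ↑x (ω i)) ≤ tdist d ↑x (ω i) := ciInf_le (iInf_bdd d n _ ω) _
  _ ≤ 1/m := tdist_le_of_mem_gcell d m hm j hxj hi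

lemma cubeMeasure_apply (d : ℕ) {s : Set (Fin d → ℝ)} (hs : MeasurableSet s) :
    cubeMeasure d s = volume (s ∩ unitCube d) := by
  rw [cubeMeasure, Measure.restrict_apply hs]

lemma unitCube_measurableSet (d : ℕ) : MeasurableSet (unitCube d) := measurableSet_Icc

instance cubeMeasure_prob (d : ℕ) : IsProbabilityMeasure (cubeMeasure d) := by
  constructor
  rw [cubeMeasure, Measure.restrict_apply MeasurableSet.univ, Set.univ_inter, unitCube,
    Real.volume_Icc_pi]
  simp

lemma gcell_measurable (d m : ℕ) (j : Fin d → Fin m) : MeasurableSet (gcell d m j) :=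
  measurableSet_Icc

lemma cubeMeasure_gcell (d m : ℕ) (hm : 0 < m) (j : Fin d → Fin m) :
    cubeMeasure d (gcell d m j) = ENNReal.ofReal ((1/m : ℝ)) ^ d := by
  rw [cubeMeasure_apply d (gcell_measurable d m j),
    Set.inter_eq_self_of_subset_left (gcell_subset d m hm j), gcell, Real.volume_Icc_pi]
  have hm' : (0:ℝ) < m := by exact_mod_cast hm
  have : ∀ i : Fin d, ((j i : ℝ) + 1)/m - (j i : ℝ)/m = 1/m := by intro i; ring
  simp_rw [this]
  rw [Finset.prod_const, Finset.card_univ, Fintype.card_fin]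

lemma volume_gcell_inter (d m : ℕ) (hm : 0 < m) {j j' : Fin d → Fin m} (hjj : j ≠ j') :
    volume (gcell d m j ∩ gcell d m j') = 0 := by
  have hm' : (0:ℝ) < m := by exact_mod_cast hm
  rw [gcell, gcell, Set.Icc_inter_Icc, Real.volume_Icc_pi]
  obtain ⟨i, hi⟩ := Function.ne_iff.mp hjj
  apply Finset.prod_eq_zero (Finset.mem_univ i)
  rw [ENNReal.ofReal_eq_zero]
  have key : ((fun i => ((j i : ℝ)+1)/m) ⊓ fun i => ((j' i : ℝ)+1)/m) i -
      ((fun i => (j i : ℝ)/m) ⊔ fun i => (j' i : ℝ)/m) i ≤ 0 := by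
    simp only [Pi.inf_apply, Pi.sup_apply]
    rcases lt_or_gt_of_ne (fun h => hi (Fin.ext h) : (j i : ℕ) ≠ (j' i : ℕ)) with h | h
    · have h1 : ((j i : ℝ) + 1) ≤ (j' i : ℝ) := by exact_mod_cast h
      have h2 : min (((j i:ℝ)+1)/m) (((j' i:ℝ)+1)/m) ≤ ((j i:ℝ)+1)/m := min_le_left _ _
      have h3 : (j' i:ℝ)/m ≤ max ((j i:ℝ)/m) ((j' i:ℝ)/m) := le_max_right _ _
      have h4 : ((j i:ℝ)+1)/m ≤ (j' i:ℝ)/m := by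
        apply div_le_div_of_nonneg_right h1 hm'.le
      linarith
    · have h1 : ((j' i : ℝ) + 1) ≤ (j i : ℝ) := by exact_mod_cast h
      have h2 : min (((j i:ℝ)+1)/m) (((j' i:ℝ)+1)/m) ≤ ((j' i:ℝ)+1)/m := min_le_right _ _
      have h3 : (j i:ℝ)/m ≤ max ((j i:ℝ)/m) ((j' i:ℝ)/m) := le_max_left _ _
      have h4 : ((j' i:ℝ)+1)/m ≤ (j i:ℝ)/m := by
        apply div_le_div_of_nonneg_right h1 hm'.le
      linarith
  exact key

noncomputable def pmeas (d n : ℕ) : Measure (Fin n → Fin d → ℝ) :=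
  Measure.pi fun _ : Fin n => cubeMeasure d

instance pmeas_prob (d n : ℕ) : IsProbabilityMeasure (pmeas d n) := by
  unfold pmeas; infer_instance

/-- avoidance event -/
def avoidE (d n m : ℕ) (j : Fin d → Fin m) : Set (Fin n → Fin d → ℝ) :=
  {ω | ∀ i, ω i ∉ gcell d m j}

lemma avoidE_eq (d n m : ℕ) (j : Fin d → Fin m) :
    avoidE d n m j = Set.pi Set.univ (fun _ : Fin n => (gcell d m j)ᶜ) := by
  ext ω; simp [avoidE, Set.mem_pi]

lemma avoidE_measurable (d n m : ℕ) (j : Fin d → Fin m) :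
    MeasurableSet (avoidE d n m j) := by
  rw [avoidE_eq]
  exact MeasurableSet.univ_pi fun _ => (gcell_measurable d m j).compl

lemma pmeas_avoidE (d n m : ℕ) (hm : 0 < m) (j : Fin d → Fin m) :
    pmeas d n (avoidE d n m j) = (1 - ENNReal.ofReal ((1/m : ℝ)) ^ d) ^ n := by
  rw [avoidE_eq, pmeas, Measure.pi_pi]
  rw [Finset.prod_const, Finset.card_univ, Fintype.card_fin]
  congr 1
  rw [measure_compl (gcell_measurable d m j) (measure_ne_top _ _), cubeMeasure_gcell d m hm j,
    measure_univ]

lemma pmeas_avoidE_inter (d n m : ℕ) (hm : 0 < m) {j j' : Fin d → Fin m} (hjj : j ≠ j') :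
    pmeas d n (avoidE d n m j ∩ avoidE d n m j')
      = (1 - 2 * ENNReal.ofReal ((1/m : ℝ)) ^ d) ^ n := by
  have he : avoidE d n m j ∩ avoidE d n m j'
      = Set.pi Set.univ (fun _ : Fin n => (gcell d m j ∪ gcell d m j')ᶜ) := by
    ext ω
    simp only [avoidE, Set.mem_inter_iff, Set.mem_setOf_eq, Set.mem_pi, Set.mem_univ,
      Set.mem_compl_iff, Set.mem_union, true_implies]
    constructor
    · rintro ⟨h1, h2⟩ i; push_neg; exact ⟨h1 i, h2 i⟩
    · intro h; constructor <;> intro i <;> have := h i <;> push_neg at this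
      · exact this.1
      · exact this.2
  rw [he, pmeas, Measure.pi_pi, Finset.prod_const, Finset.card_univ, Fintype.card_fin]
  congr 1
  have hunion : cubeMeasure d (gcell d m j ∪ gcell d m j')
      = 2 * ENNReal.ofReal ((1/m : ℝ)) ^ d := by
    have hint : cubeMeasure d (gcell d m j ∩ gcell d m j') = 0 := by
      apply le_antisymm _ zero_le
      rw [cubeMeasure]
      calc volume.restrict (unitCube d) (gcell d m j ∩ gcell d m j')
          ≤ volume (gcell d m j ∩ gcell d m j') := Measure.restrict_le_self _
      _ = 0 := volume_gcell_inter d m hm hjj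
    have := measure_union_add_inter (μ := cubeMeasure d) (gcell d m j)
      (gcell_measurable d m j')
    rw [hint, add_zero] at this
    rw [this, cubeMeasure_gcell d m hm j, cubeMeasure_gcell d m hm j', two_mul]
  rw [measure_compl ((gcell_measurable d m j).union (gcell_measurable d m j'))
    (measure_ne_top _ _), hunion, measure_univ]

lemma ofReal_pow_inv (d m : ℕ) (hm : 0 < m) :
    ENNReal.ofReal ((1/m : ℝ)) ^ d = ENNReal.ofReal (1/(m:ℝ)^d) := by
  rw [← ENNReal.ofReal_pow (by positivity), one_div, one_div, inv_pow]

lemma pmeas_avoidE_toReal (d n m : ℕ) (hm : 0 < m) (j : Fin d → Fin m) :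
    (pmeas d n (avoidE d n m j)).toReal = (1 - 1/(m:ℝ)^d) ^ n := by
  have hm' : (0:ℝ) < m := by exact_mod_cast hm
  have h1 : (1:ℝ)/(m:ℝ)^d ≤ 1 := by
    rw [div_le_one (by positivity)]
    exact one_le_pow₀ (by exact_mod_cast hm)
  rw [pmeas_avoidE d n m hm j, ofReal_pow_inv d m hm,
    ← ENNReal.ofReal_one,
    ← ENNReal.ofReal_sub 1 (q := 1/(m:ℝ)^d) (by positivity),
    ← ENNReal.ofReal_pow (p := 1 - 1/(m:ℝ)^d) (by linarith),
    ENNReal.toReal_ofReal (pow_nonneg (by linarith) n)]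

lemma pmeas_avoidE_inter_toReal (d n m : ℕ) (hm : 0 < m) {j j' : Fin d → Fin m}
    (hjj : j ≠ j') (h2 : 2/(m:ℝ)^d ≤ 1) :
    (pmeas d n (avoidE d n m j ∩ avoidE d n m j')).toReal = (1 - 2/(m:ℝ)^d) ^ n := by
  have hm' : (0:ℝ) < m := by exact_mod_cast hm
  rw [pmeas_avoidE_inter d n m hm hjj, ofReal_pow_inv d m hm]
  have h3 : (2:ℝ≥0∞) * ENNReal.ofReal (1/(m:ℝ)^d) = ENNReal.ofReal (2/(m:ℝ)^d) := by
    rw [← ENNReal.ofReal_ofNat, ← ENNReal.ofReal_mul (by norm_num)]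
    congr 1
    ring
  rw [h3, ← ENNReal.ofReal_one,
    ← ENNReal.ofReal_sub 1 (q := 2/(m:ℝ)^d) (by positivity),
    ← ENNReal.ofReal_pow (p := 1 - 2/(m:ℝ)^d) (by linarith),
    ENNReal.toReal_ofReal (pow_nonneg (by linarith) n)]

/-- almost every ω is good -/
lemma ae_good (d n : ℕ) : ∀ᵐ ω ∂(pmeas d n), ∀ i, ω i ∈ unitCube d := by
  rw [ae_iff]
  apply le_antisymm _ zero_le
  have hsub : {ω : Fin n → Fin d → ℝ | ¬∀ i, ω i ∈ unitCube d}
      ⊆ ⋃ i : Fin n, (fun ω => ω i) ⁻¹' (unitCube d)ᶜ := by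
    intro ω hω
    push_neg at hω
    obtain ⟨i, hi⟩ := hω
    exact Set.mem_iUnion.mpr ⟨i, hi⟩
  refine le_trans (measure_mono hsub) (le_trans (measure_iUnion_fintype_le _ _) ?_)
  have hz : ∀ i : Fin n, pmeas d n ((fun ω => ω i) ⁻¹' (unitCube d)ᶜ) = 0 := by
    intro i
    have he : (fun ω : Fin n → Fin d → ℝ => ω i) ⁻¹' (unitCube d)ᶜ
        = Set.pi Set.univ (Function.update (fun _ : Fin n => (Set.univ : Set (Fin d → ℝ))) i
          (unitCube d)ᶜ) := by
      ext ω
      simp only [Set.mem_preimage, Set.mem_pi, Set.mem_univ, true_implies]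
      constructor
      · intro h k
        rcases eq_or_ne k i with rfl | hk
        · simpa using h
        · simp [Function.update_of_ne hk]
      · intro h
        have := h i
        simpa using this
    rw [he, pmeas, Measure.pi_pi]
    apply Finset.prod_eq_zero (Finset.mem_univ i)
    rw [Function.update_self]
    rw [cubeMeasure, Measure.restrict_apply (unitCube_measurableSet d).compl]
    simp
  simp only [Set.preimage_compl] at hz
  simp [hz]

lemma indicator_integrable {α : Type*} [MeasurableSpace α] {μ : Measure α}
    [IsProbabilityMeasure μ] {s : Set α} (hs : MeasurableSet s) (c : ℝ) :
    Integrable (s.indicator fun _ => c) μ := by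
  apply Integrable.indicator _ hs
  exact integrable_const c

lemma second_moment_lower {α : Type*} [MeasurableSpace α] {μ : Measure α}
    [IsProbabilityMeasure μ] {ι : Type*} [Fintype ι] (A : ι → Set α) (hA : ∀ j, MeasurableSet (A j))
    (p1 p2 : ℝ) (hp2 : 0 ≤ p2)
    (hAp1 : ∀ j, (μ (A j)).toReal = p1)
    (hAp2 : ∀ j j', j ≠ j' → (μ (A j ∩ A j')).toReal ≤ p2) :
    ((Fintype.card ι : ℝ) * p1)^2
      ≤ (μ (⋃ j, A j)).toReal *
        ((Fintype.card ι : ℝ) * p1 + (Fintype.card ι : ℝ)^2 * p2) := by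
  classical
  set c := (Fintype.card ι : ℝ) with hc
  set N : α → ℝ := fun a => ∑ j : ι, (A j).indicator (fun _ => (1:ℝ)) a with hN
  set U : Set α := ⋃ j, A j with hU
  have hUmeas : MeasurableSet U := MeasurableSet.iUnion fun j => hA j
  have hNmeas : Measurable N := by
    apply Finset.measurable_sum
    intro j _
    exact (measurable_const.indicator (hA j))
  have hNnonneg : ∀ a, 0 ≤ N a := by
    intro a
    apply Finset.sum_nonneg
    intro j _
    exact Set.indicator_nonneg (fun _ _ => zero_le_one) a
  have hNbound : ∀ a, ‖N a‖ ≤ c := by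
    intro a
    rw [Real.norm_eq_abs, abs_of_nonneg (hNnonneg a)]
    calc N a ≤ ∑ j : ι, (1:ℝ) := by
          apply Finset.sum_le_sum
          intro j _
          exact Set.indicator_le_self' (fun _ _ => zero_le_one) a
    _ = c := by simp [hc]
  -- integral of N
  have hintN : ∫ a, N a ∂μ = c * p1 := by
    rw [hN]
    rw [integral_finset_sum _ (fun j _ => indicator_integrable (hA j) 1)]
    have : ∀ j : ι, ∫ a, (A j).indicator (fun _ => (1:ℝ)) a ∂μ = p1 := by
      intro j
      rw [integral_indicator_const (1:ℝ) (hA j), smul_eq_mul, mul_one, measureReal_def, hAp1 j]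
    simp_rw [this]
    rw [Finset.sum_const, Finset.card_univ, nsmul_eq_mul]
  -- integral of N^2
  have hNsq : ∀ a, N a ^ 2 = ∑ j : ι, ∑ j' : ι,
      ((A j ∩ A j').indicator (fun _ => (1:ℝ)) a) := by
    intro a
    rw [hN, sq, Finset.sum_mul_sum]
    congr 1
    funext j
    congr 1
    funext j'
    rw [← Set.inter_indicator_mul]
    simp
  have hintN2 : ∫ a, N a ^ 2 ∂μ ≤ c * p1 + c^2 * p2 := by
    simp_rw [hNsq]
    rw [integral_finset_sum _ (fun j _ => ?_)]
    swap
    · apply integrable_finset_sum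
      intro j' _
      exact indicator_integrable ((hA j).inter (hA j')) 1
    have heval : ∀ j j' : ι, ∫ a, (A j ∩ A j').indicator (fun _ => (1:ℝ)) a ∂μ
        = (μ (A j ∩ A j')).toReal := by
      intro j j'
      rw [integral_indicator_const (1:ℝ) ((hA j).inter (hA j')), smul_eq_mul, mul_one, measureReal_def]
    calc ∑ j : ι, ∫ a, (∑ j' : ι, (A j ∩ A j').indicator (fun _ => (1:ℝ)) a) ∂μ
        = ∑ j : ι, ∑ j' : ι, (μ (A j ∩ A j')).toReal := by
          congr 1
          funext j
          rw [integral_finset_sum _ (fun j' _ => indicator_integrable ((hA j).inter (hA j')) 1)]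
          simp_rw [heval]
    _ ≤ ∑ j : ι, ∑ j' : ι, (if j = j' then p1 else p2) := by
          apply Finset.sum_le_sum
          intro j _
          apply Finset.sum_le_sum
          intro j' _
          by_cases h : j = j'
          · simp only [h, if_pos]
            subst h
            rw [Set.inter_self, hAp1 j]
          · simp only [h, if_neg, if_false]
            exact hAp2 j j' h
    _ ≤ c * p1 + c^2 * p2 := by
          have hrow : ∀ j : ι, (∑ j' : ι, (if j = j' then p1 else p2)) ≤ p1 + c * p2 := by
            intro j
            have he : (fun j' : ι => if j = j' then p1 else p2)
                = fun j' : ι => (if j = j' then p1 - p2 else 0) + p2 := by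
              funext j'
              split_ifs <;> ring
            rw [he, Finset.sum_add_distrib, Finset.sum_ite_eq Finset.univ j (fun _ => p1 - p2),
              if_pos (Finset.mem_univ j), Finset.sum_const, Finset.card_univ, nsmul_eq_mul]
            linarith
          calc (∑ j : ι, ∑ j' : ι, (if j = j' then p1 else p2))
              ≤ ∑ j : ι, (p1 + c * p2) := Finset.sum_le_sum fun j _ => hrow j
          _ = c * (p1 + c * p2) := by
              rw [Finset.sum_const, Finset.card_univ, nsmul_eq_mul]
          _ = c * p1 + c^2 * p2 := by ring
  -- Cauchy–Schwarz
  have hcp1 : 0 ≤ c * p1 := by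
    rw [← hintN]
    exact integral_nonneg hNnonneg
  have hconj : Real.HolderConjugate 2 2 := ⟨by norm_num, by norm_num, by norm_num⟩
  have hind_nonneg : ∀ a, (0:ℝ) ≤ U.indicator (fun _ => (1:ℝ)) a :=
    fun a => Set.indicator_nonneg (fun _ _ => zero_le_one) a
  have hMemN : MemLp N (ENNReal.ofReal 2) μ :=
    MemLp.of_bound hNmeas.aestronglyMeasurable c (Filter.Eventually.of_forall hNbound)
  have hMemU : MemLp (U.indicator fun _ => (1:ℝ)) (ENNReal.ofReal 2) μ := by
    refine MemLp.of_bound ?_ 1 (Filter.Eventually.of_forall ?_)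
    · exact (measurable_const.indicator hUmeas).aestronglyMeasurable
    · intro a
      rw [Real.norm_eq_abs, abs_of_nonneg (hind_nonneg a)]
      exact Set.indicator_le_self' (fun _ _ => zero_le_one) a
  have holder := integral_mul_le_Lp_mul_Lq_of_nonneg hconj
    (Filter.Eventually.of_forall hNnonneg) (Filter.Eventually.of_forall hind_nonneg) hMemN hMemU
  have hNU : ∀ a, N a * U.indicator (fun _ => (1:ℝ)) a = N a := by
    intro a
    by_cases h : a ∈ U
    · rw [Set.indicator_of_mem h, mul_one]
    · have hz : N a = 0 := by
        rw [hN]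
        apply Finset.sum_eq_zero
        intro j _
        apply Set.indicator_of_notMem
        intro hj
        exact h (Set.mem_iUnion.mpr ⟨j, hj⟩)
      rw [hz, zero_mul]
  have hrpowN : ∀ a, N a ^ (2:ℝ) = N a ^ 2 := by
    intro a
    rw [show (2:ℝ) = ((2:ℕ):ℝ) by norm_num, Real.rpow_natCast]
  have hrpowU : ∀ a, U.indicator (fun _ => (1:ℝ)) a ^ (2:ℝ)
      = U.indicator (fun _ => (1:ℝ)) a := by
    intro a
    by_cases h : a ∈ U
    · rw [Set.indicator_of_mem h, Real.one_rpow]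
    · rw [Set.indicator_of_notMem h, Real.zero_rpow (by norm_num)]
  rw [integral_congr_ae (Filter.Eventually.of_forall hNU)] at holder
  simp_rw [hrpowN, hrpowU] at holder
  rw [hintN] at holder
  rw [integral_indicator_const (1:ℝ) hUmeas, smul_eq_mul, mul_one] at holder
  set S := ∫ a, N a ^ 2 ∂μ with hS
  set t := (μ U).toReal with ht
  have hSnn : 0 ≤ S := by
    rw [hS]
    apply integral_nonneg
    intro a
    positivity
  have htnn : 0 ≤ t := ENNReal.toReal_nonneg
  have hsq : (S ^ ((1:ℝ)/2) * t ^ ((1:ℝ)/2))^2 = S * t := by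
    rw [mul_pow, ← Real.rpow_natCast (S ^ ((1:ℝ)/2)) 2, ← Real.rpow_natCast (t ^ ((1:ℝ)/2)) 2,
      ← Real.rpow_mul hSnn, ← Real.rpow_mul htnn]
    norm_num
  have hle : (c * p1)^2 ≤ S * t := by
    rw [← hsq]
    apply pow_le_pow_left₀ hcp1 holder
  calc (c * p1)^2 ≤ S * t := hle
  _ ≤ (c * p1 + c^2 * p2) * t := mul_le_mul_of_nonneg_right hintN2 htnn
  _ = t * (c * p1 + c^2 * p2) := by ring

lemma ell_ge_two {ln : ℕ} (h : (1:ℝ) ≤ (ln:ℝ) * (((harmonic ln : ℚ) : ℝ) - 2)) : 2 ≤ ln := by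
  by_contra hc
  push_neg at hc
  interval_cases ln
  · simp [harmonic_zero] at h
    norm_num at h
  · rw [show harmonic 1 = 1 by simp [harmonic]] at h
    norm_num at h

/-- lower-bound analytic lemma -/
lemma an_lower {ln n : ℕ} (hl : 2 ≤ ln) (hn : 0 < n)
    (hle : (n:ℝ) ≤ (ln:ℝ) * (((harmonic ln : ℚ) : ℝ) - 2)) :
    1 ≤ (ln:ℝ) * (1 - 1/(ln:ℝ))^n := by
  set L := Real.log (ln:ℝ) with hL
  have hl' : (2:ℝ) ≤ (ln:ℝ) := by exact_mod_cast hl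
  have hlpos : (0:ℝ) < ln := by linarith
  have hH : ((harmonic ln : ℚ) : ℝ) ≤ 1 + L := harmonic_le_one_add_log ln
  have hlog_le : L ≤ (ln:ℝ) := le_trans (Real.log_le_sub_one_of_pos hlpos) (by linarith)
  have hn_le : (n:ℝ) ≤ ((ln:ℝ) - 1) * L := by
    have h1 : (n:ℝ) ≤ (ln:ℝ) * (L - 1) := by
      calc (n:ℝ) ≤ (ln:ℝ) * (((harmonic ln : ℚ) : ℝ) - 2) := hle
      _ ≤ (ln:ℝ) * (L - 1) := by
          apply mul_le_mul_of_nonneg_left (by linarith) (by linarith)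
    nlinarith
  set u := 1/((ln:ℝ) - 1) with hu
  have hupos : 0 < u := by rw [hu]; apply div_pos one_pos; linarith
  have key1 : Real.exp (-u) ≤ 1 - 1/(ln:ℝ) := by
    have h2 := Real.add_one_le_exp u
    have h3 : Real.exp (-u) = (Real.exp u)⁻¹ := Real.exp_neg u
    have h4 : (Real.exp u)⁻¹ ≤ (u+1)⁻¹ := by
      apply inv_anti₀ (by linarith) (by linarith)
    have h5 : (u+1)⁻¹ = 1 - 1/(ln:ℝ) := by
      rw [hu]
      have e1 : (ln:ℝ) - 1 ≠ 0 := by linarith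
      have e2 : (ln:ℝ) ≠ 0 := by linarith
      field_simp
      rw [show (1:ℝ) + ((ln:ℝ) - 1) = ln by ring, div_self e2]
    rw [h3, ← h5]
    exact h4
  have key2 : Real.exp (-u) ^ n ≤ (1 - 1/(ln:ℝ))^n :=
    pow_le_pow_left₀ (Real.exp_nonneg _) key1 n
  have key3 : Real.exp (-(L)) ≤ Real.exp (-u) ^ n := by
    rw [← Real.exp_nat_mul]
    apply Real.exp_le_exp.mpr
    have : (n:ℝ) * u ≤ L := by
      rw [hu, mul_one_div, div_le_iff₀ (by linarith)]
      linarith [hn_le]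
    linarith
  have key4 : Real.exp (-(L)) = ((ln:ℝ))⁻¹ := by
    rw [Real.exp_neg, hL, Real.exp_log hlpos]
  have : ((ln:ℝ))⁻¹ ≤ (1 - 1/(ln:ℝ))^n := by
    rw [← key4]; exact le_trans key3 key2
  calc (1:ℝ) = (ln:ℝ) * ((ln:ℝ))⁻¹ := by
        rw [mul_inv_cancel₀ (by linarith)]
  _ ≤ (ln:ℝ) * (1 - 1/(ln:ℝ))^n := mul_le_mul_of_nonneg_left this (by linarith)

/-- upper-bound analytic lemma -/
lemma an_upper {ln n : ℕ} (hl : 1 ≤ ln)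
    (hle : 2 * (ln:ℝ) * Real.log (ln:ℝ) ≤ (n:ℝ)) :
    (ln:ℝ) * (1 - 1/(ln:ℝ))^n ≤ 1/(ln:ℝ) := by
  set L := Real.log (ln:ℝ) with hL
  have hl' : (1:ℝ) ≤ (ln:ℝ) := by exact_mod_cast hl
  have hlpos : (0:ℝ) < ln := by linarith
  have key1 : 1 - 1/(ln:ℝ) ≤ Real.exp (-(1/(ln:ℝ))) := by
    have := Real.add_one_le_exp (-(1/(ln:ℝ)))
    linarith
  have h1n : (0:ℝ) ≤ 1 - 1/(ln:ℝ) := by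
    rw [sub_nonneg, div_le_one hlpos]
    exact hl'
  have key2 : (1 - 1/(ln:ℝ))^n ≤ Real.exp (-(1/(ln:ℝ)))^n :=
    pow_le_pow_left₀ h1n key1 n
  have key3 : Real.exp (-(1/(ln:ℝ)))^n ≤ Real.exp (-(2*L)) := by
    rw [← Real.exp_nat_mul]
    apply Real.exp_le_exp.mpr
    have : 2*L ≤ (n:ℝ) * (1/(ln:ℝ)) := by
      rw [mul_one_div, le_div_iff₀ hlpos]
      calc 2*L*(ln:ℝ) = 2*(ln:ℝ)*L := by ring
      _ ≤ (n:ℝ) := hle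
    linarith
  have key4 : Real.exp (-(2*L)) = (((ln:ℝ))^2)⁻¹ := by
    rw [Real.exp_neg]
    congr 1
    rw [show (2:ℝ)*L = ((2:ℕ):ℝ)*L by norm_num, Real.exp_nat_mul, hL, Real.exp_log hlpos]
  calc (ln:ℝ) * (1 - 1/(ln:ℝ))^n ≤ (ln:ℝ) * (((ln:ℝ))^2)⁻¹ := by
        apply mul_le_mul_of_nonneg_left _ (by linarith)
        rw [← key4]
        exact le_trans key2 key3
  _ = 1/(ln:ℝ) := by
        rw [sq]
        field_simp

lemma gfun_integrable (d n : ℕ) (hn : 0 < n) : Integrable (gfun d n) (pmeas d n) := by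
  rw [← memLp_one_iff_integrable]
  apply MemLp.of_bound ((gfun_lip d n hn).continuous.measurable.aestronglyMeasurable) (1/2)
  filter_upwards [ae_good d n] with ω hω
  rw [Real.norm_eq_abs, abs_of_nonneg (gfun_nonneg d n hn ω)]
  exact gfun_le_half d n hn hω

lemma lower_bound (d : ℕ) (hd : 0 < d) (n : ℕ) (hn : 0 < n) (m₁ : ℕ)
    (hmem : (n : ℝ) ≤ ((m₁ ^ d : ℕ) : ℝ) * (((harmonic (m₁ ^ d) : ℚ) : ℝ) - 2)) :
    1 / (4 * (m₁ : ℝ)) ≤ ∫ ω, gfun d n ω ∂(pmeas d n) := by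
  classical
  set ln := m₁ ^ d with hln
  have h1n : (1:ℝ) ≤ (n:ℝ) := by exact_mod_cast hn
  have hl2 : 2 ≤ ln := ell_ge_two (le_trans h1n hmem)
  have hm₁ : 0 < m₁ := by
    by_contra hc
    push_neg at hc
    interval_cases m₁
    · rw [hln, zero_pow hd.ne'] at hl2
      omega
  have hm₁' : (0:ℝ) < m₁ := by exact_mod_cast hm₁
  have hl2' : (2:ℝ) ≤ (ln:ℝ) := by exact_mod_cast hl2
  have hlpow : ((ln:ℕ):ℝ) = ((m₁:ℝ))^d := by rw [hln]; push_cast; ring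
  -- measure of the union event
  set U : Set (Fin n → Fin d → ℝ) := ⋃ j : Fin d → Fin m₁, avoidE d n m₁ j with hU
  have hUmeas : MeasurableSet U := MeasurableSet.iUnion fun j => avoidE_measurable d n m₁ j
  set p1 : ℝ := (1 - 1/(m₁:ℝ)^d)^n with hp1
  set p2 : ℝ := (1 - 2/(m₁:ℝ)^d)^n with hp2
  have hcard : (Fintype.card (Fin d → Fin m₁) : ℝ) = ((m₁:ℝ))^d := by
    rw [Fintype.card_fun, Fintype.card_fin, Fintype.card_fin]
    push_cast; ring
  have h2le : 2/((m₁:ℝ))^d ≤ 1 := by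
    rw [div_le_one (by positivity)]
    rw [← hlpow]; exact hl2'
  have h1le : 1/((m₁:ℝ))^d ≤ 1 := by
    rw [div_le_one (by positivity)]
    rw [← hlpow]; linarith
  have hp2nn : 0 ≤ p2 := pow_nonneg (by linarith) n
  have hp1nn : 0 ≤ p1 := pow_nonneg (by linarith) n
  have hsm := second_moment_lower (μ := pmeas d n) (fun j : Fin d → Fin m₁ => avoidE d n m₁ j)
    (fun j => avoidE_measurable d n m₁ j) p1 p2 hp2nn
    (fun j => by rw [pmeas_avoidE_toReal d n m₁ hm₁ j])
    (fun j j' hjj => le_of_eq (pmeas_avoidE_inter_toReal d n m₁ hm₁ hjj h2le))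
  rw [hcard] at hsm
  have hbeta : (⋃ j, avoidE d n m₁ j) = U := rfl
  rw [hbeta] at hsm
  have htnn : 0 ≤ (pmeas d n U).toReal := ENNReal.toReal_nonneg
  have hx1 : 1 ≤ ((m₁:ℝ))^d * p1 := by
    rw [hp1, ← hlpow]
    exact an_lower hl2 hn hmem
  have hp1b : 1 - 2/(m₁:ℝ)^d ≤ (1 - 1/(m₁:ℝ)^d)^2 := by
    have h : (1 - 1/(m₁:ℝ)^d)^2 = 1 - 2/(m₁:ℝ)^d + (1/(m₁:ℝ)^d)^2 := by ring
    rw [h]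
    nlinarith [sq_nonneg (1/(m₁:ℝ)^d)]
  have he2 : ((1 - 1/(m₁:ℝ)^d)^2)^n = p1^2 := by
    rw [hp1, ← pow_mul, mul_comm, pow_mul]
  have hple : p2 ≤ p1^2 := by
    rw [hp2, ← he2]
    exact pow_le_pow_left₀ (by linarith) hp1b n
  have hp2le : (((m₁:ℝ))^d)^2 * p2 ≤ (((m₁:ℝ))^d * p1)^2 := by
    calc (((m₁:ℝ))^d)^2 * p2 ≤ (((m₁:ℝ))^d)^2 * p1^2 :=
          mul_le_mul_of_nonneg_left hple (by positivity)
    _ = (((m₁:ℝ))^d * p1)^2 := by ring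
  have hkey : (((m₁:ℝ))^d * p1)^2
      ≤ (pmeas d n U).toReal * (((m₁:ℝ))^d * p1 + (((m₁:ℝ))^d * p1)^2) := by
    calc (((m₁:ℝ))^d * p1)^2
        ≤ (pmeas d n U).toReal * (((m₁:ℝ))^d * p1 + (((m₁:ℝ))^d)^2 * p2) := hsm
    _ ≤ (pmeas d n U).toReal * (((m₁:ℝ))^d * p1 + (((m₁:ℝ))^d * p1)^2) := by
        apply mul_le_mul_of_nonneg_left _ htnn
        linarith
  have ht12 : 1/2 ≤ (pmeas d n U).toReal := by nlinarith
  -- now integrate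
  have hint1 : Integrable (fun ω => U.indicator (fun _ => 1/(2*(m₁:ℝ))) ω) (pmeas d n) :=
    (integrable_const (1/(2*(m₁:ℝ)))).indicator hUmeas
  have hmono : (fun ω => U.indicator (fun _ => 1/(2*(m₁:ℝ))) ω) ≤ᵐ[pmeas d n] gfun d n := by
    filter_upwards [ae_good d n] with ω hω
    by_cases h : ω ∈ U
    · rw [Set.indicator_of_mem h]
      apply le_gfun_of_empty_cell d n m₁ hn hm₁ hω
      rw [hU] at h
      obtain ⟨j, hj⟩ := Set.mem_iUnion.mp h
      exact ⟨j, hj⟩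
    · rw [Set.indicator_of_notMem h]
      exact gfun_nonneg d n hn ω
  calc 1/(4*(m₁:ℝ)) = (1/2) * (1/(2*(m₁:ℝ))) := by ring
  _ ≤ (pmeas d n U).toReal * (1/(2*(m₁:ℝ))) :=
        mul_le_mul_of_nonneg_right ht12 (by positivity)
  _ = ∫ ω, U.indicator (fun _ => 1/(2*(m₁:ℝ))) ω ∂(pmeas d n) := by
        rw [integral_indicator_const _ hUmeas, smul_eq_mul, measureReal_def]
  _ ≤ ∫ ω, gfun d n ω ∂(pmeas d n) :=
        integral_mono_ae hint1 (gfun_integrable d n hn) hmono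

lemma upper_bound (d : ℕ) (hd : 0 < d) (n : ℕ) (hn : 0 < n) (m₂ : ℕ) (hm₂ : 1 ≤ m₂)
    (hmem : 2 * ((m₂ ^ d : ℕ) : ℝ) * Real.log ((m₂ ^ d : ℕ) : ℝ) ≤ (n:ℝ)) :
    ∫ ω, gfun d n ω ∂(pmeas d n) ≤ 2 / (m₂ : ℝ) := by
  classical
  have hm₂' : (1:ℝ) ≤ (m₂:ℝ) := by exact_mod_cast hm₂
  have hm₂pos : 0 < m₂ := hm₂
  have hlpow : ((m₂ ^ d : ℕ) : ℝ) = ((m₂:ℝ))^d := by push_cast; ring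
  have hl1 : 1 ≤ m₂ ^ d := Nat.one_le_pow d m₂ hm₂pos
  set B : Set (Fin n → Fin d → ℝ) := ⋃ j : Fin d → Fin m₂, avoidE d n m₂ j with hB
  have hBmeas : MeasurableSet B := MeasurableSet.iUnion fun j => avoidE_measurable d n m₂ j
  set p1 : ℝ := (1 - 1/(m₂:ℝ)^d)^n with hp1
  -- measure of B
  have hBbound : (pmeas d n B).toReal ≤ 1/((m₂:ℝ))^d := by
    have hsum : pmeas d n B ≤ ∑ j : Fin d → Fin m₂, pmeas d n (avoidE d n m₂ j) := by
      rw [hB]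
      exact measure_iUnion_fintype_le _ _
    have hfin : (∑ j : Fin d → Fin m₂, pmeas d n (avoidE d n m₂ j)) ≠ ⊤ := by
      apply ENNReal.sum_ne_top.mpr
      intro j _
      exact measure_ne_top _ _
    have h1 : (pmeas d n B).toReal
        ≤ (∑ j : Fin d → Fin m₂, pmeas d n (avoidE d n m₂ j)).toReal :=
      ENNReal.toReal_mono hfin hsum
    have h2 : (∑ j : Fin d → Fin m₂, pmeas d n (avoidE d n m₂ j)).toReal
        = ((m₂:ℝ))^d * p1 := by
      rw [ENNReal.toReal_sum (fun j _ => measure_ne_top _ _)]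
      have : ∀ j : Fin d → Fin m₂, (pmeas d n (avoidE d n m₂ j)).toReal = p1 :=
        fun j => pmeas_avoidE_toReal d n m₂ hm₂pos j
      simp_rw [this]
      rw [Finset.sum_const, Finset.card_univ, nsmul_eq_mul, Fintype.card_fun,
        Fintype.card_fin, Fintype.card_fin]
      push_cast; ring
    have h3 : ((m₂:ℝ))^d * p1 ≤ 1/((m₂:ℝ))^d := by
      have := an_upper (ln := m₂ ^ d) (n := n) hl1 hmem
      rw [hlpow] at this
      exact this
    linarith
  -- pointwise bound
  set F : (Fin n → Fin d → ℝ) → ℝ :=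
    fun ω => 1/(m₂:ℝ) + B.indicator (fun _ => (1/2:ℝ)) ω with hF
  have hFint : Integrable F (pmeas d n) := by
    apply Integrable.add (integrable_const _)
    exact (integrable_const (1/2:ℝ)).indicator hBmeas
  have hmono : gfun d n ≤ᵐ[pmeas d n] F := by
    filter_upwards [ae_good d n] with ω hω
    show gfun d n ω ≤ 1/(m₂:ℝ) + B.indicator (fun _ => (1/2:ℝ)) ω
    by_cases h : ω ∈ B
    · rw [Set.indicator_of_mem h]
      have := gfun_le_half d n hn hω
      have hpos : (0:ℝ) < 1/(m₂:ℝ) := by positivity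
      linarith
    · rw [Set.indicator_of_notMem h, add_zero]
      apply gfun_le_of_covered d n m₂ hn hm₂pos hω
      intro j
      rw [hB] at h
      by_contra hc
      push_neg at hc
      exact h (Set.mem_iUnion.mpr ⟨j, fun i => hc i⟩)
  have hintF : ∫ ω, F ω ∂(pmeas d n) = 1/(m₂:ℝ) + (pmeas d n B).toReal * (1/2) := by
    rw [hF, integral_add (integrable_const _) ((integrable_const (1/2:ℝ)).indicator hBmeas),
      integral_const, integral_indicator_const _ hBmeas]
    simp [measure_univ, measureReal_def]
  have hinvle : 1/((m₂:ℝ))^d ≤ 1/(m₂:ℝ) := by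
    apply one_div_le_one_div_of_le (by linarith)
    calc (m₂:ℝ) = ((m₂:ℕ):ℝ) := rfl
    _ ≤ (((m₂ ^ d :ℕ)):ℝ) := by exact_mod_cast Nat.le_self_pow hd.ne' m₂
    _ = ((m₂:ℝ))^d := hlpow
  calc ∫ ω, gfun d n ω ∂(pmeas d n) ≤ ∫ ω, F ω ∂(pmeas d n) :=
        integral_mono_ae (gfun_integrable d n hn) hFint hmono
  _ = 1/(m₂:ℝ) + (pmeas d n B).toReal * (1/2) := hintF
  _ ≤ 1/(m₂:ℝ) + (1/((m₂:ℝ))^d) * (1/2) := by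
        apply add_le_add le_rfl
        apply mul_le_mul_of_nonneg_right hBbound (by norm_num)
  _ ≤ 1/(m₂:ℝ) + (1/(m₂:ℝ)) * (1/2) := by
        apply add_le_add le_rfl
        apply mul_le_mul_of_nonneg_right hinvle (by norm_num)
  _ ≤ 2/(m₂:ℝ) := by
        have he : 1/(m₂:ℝ) + (1/(m₂:ℝ))*(1/2) = (3/2)/(m₂:ℝ) := by ring
        rw [he]
        apply div_le_div_of_nonneg_right (by norm_num) (by linarith)

theorem stmt14 (d : ℕ) (hd : 0 < d) (n : ℕ) (hn : 0 < n) (m₁ m₂ : ℕ)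
    (h₁ : IsLeast {m : ℕ | (n : ℝ) ≤ (m ^ d : ℕ) * (((harmonic (m ^ d) : ℚ) : ℝ) - 2)} m₁)
    (h₂ : IsGreatest {m : ℕ | 2 * ((m ^ d : ℕ) : ℝ) * Real.log ((m ^ d : ℕ) : ℝ) ≤ n} m₂) :
    1 / (4 * (m₁ : ℝ))
        ≤ ∫ ω : Fin n → Fin d → ℝ,
            (⨆ x : unitCube d, ⨅ i, tdist d ↑x (ω i))
            ∂(Measure.pi fun _ : Fin n => cubeMeasure d) ∧
      (∫ ω : Fin n → Fin d → ℝ,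
          (⨆ x : unitCube d, ⨅ i, tdist d ↑x (ω i))
          ∂(Measure.pi fun _ : Fin n => cubeMeasure d))
        ≤ 2 / (m₂ : ℝ) := by
  constructor
  · exact lower_bound d hd n hn m₁ h₁.1
  · have hm₂ : 1 ≤ m₂ := by
      apply h₂.2
      show 2 * (((1:ℕ) ^ d : ℕ) : ℝ) * Real.log (((1:ℕ) ^ d : ℕ) : ℝ) ≤ (n : ℝ)
      simp
    exact upper_bound d hd n hn m₂ hm₂ h₂.1
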